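/- Let S_n be conditionally binomial: given R_n = k, S_n is Binomial(k, 1/2) distributed, for a random variable R_n taking values in {0,1,...,n+1}. Then P(S_n ≤ R_n/4) ≤ E[exp(-R_n/16)]. -/
import Mathlib


open MeasureTheory
open scoped ENNReal


open Finset

lemma chernoff_half (k : ℕ) :
    ∑ l ∈ (Finset.range (k+1)).filter (fun l => 4 * l ≤ k),
      (k.choose l : ℝ) * (2⁻¹ : ℝ) ^ k ≤ Real.exp (-(k : ℝ) / 16) := by
  set c : ℝ := Real.sqrt (Real.sqrt 2) with hc
  have hc0 : 0 ≤ c := Real.sqrt_nonneg _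
  have hc4 : c ^ 4 = 2 := by
    have h1 : c ^ 2 = Real.sqrt 2 := Real.sq_sqrt (Real.sqrt_nonneg 2)
    have h2 : Real.sqrt 2 ^ 2 = 2 := Real.sq_sqrt (by norm_num)
    calc c ^ 4 = (c ^ 2) ^ 2 := by ring
    _ = 2 := by rw [h1, h2]
  have hbin : ∑ l ∈ Finset.range (k+1), (k.choose l : ℝ) * (2⁻¹ : ℝ) ^ l
      = (3/2 : ℝ) ^ k := by
    have h := add_pow (2⁻¹ : ℝ) 1 k
    simp only [one_pow, mul_one] at h
    rw [show (2⁻¹ + 1 : ℝ) = 3/2 by norm_num] at h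
    rw [h]
    apply Finset.sum_congr rfl
    intro l _; ring
  have hce : 3/2 * 2⁻¹ * c ≤ Real.exp (-(1:ℝ)/16) := by
    apply le_of_pow_le_pow_left₀ (n := 4) (by norm_num) (Real.exp_pos _).le
    have h1 : (3/2 * 2⁻¹ * c : ℝ) ^ 4 = 81/128 := by
      have : (3/2 * 2⁻¹ * c : ℝ) ^ 4 = (81/256) * c ^ 4 := by ring
      rw [this, hc4]; norm_num
    have h2 : Real.exp (-(1:ℝ)/16) ^ 4 = Real.exp (-(1:ℝ)/4) := by
      rw [← Real.exp_nat_mul]; norm_num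
    rw [h1, h2]
    have := Real.add_one_le_exp (-(1:ℝ)/4)
    linarith
  calc ∑ l ∈ (Finset.range (k+1)).filter (fun l => 4 * l ≤ k),
        (k.choose l : ℝ) * (2⁻¹ : ℝ) ^ k
      ≤ ∑ l ∈ Finset.range (k+1),
          ((k.choose l : ℝ) * (2⁻¹ : ℝ) ^ l) * ((2⁻¹ : ℝ) ^ k * c ^ k) := by
        apply le_trans (Finset.sum_le_sum ?_)
          (Finset.sum_le_sum_of_subset_of_nonneg (Finset.filter_subset _ _) ?_)
        · intro l hl
          simp only [Finset.mem_filter, Finset.mem_range] at hl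
          have h4l : 4 * l ≤ k := hl.2
          have h1 : (2 : ℝ) ^ l ≤ c ^ k := by
            apply le_of_pow_le_pow_left₀ (n := 4) (by norm_num) (by positivity)
            calc ((2:ℝ) ^ l) ^ 4 = 2 ^ (4 * l) := by rw [← pow_mul, mul_comm]
            _ ≤ 2 ^ k := pow_le_pow_right₀ (by norm_num) h4l
            _ = (c ^ 4) ^ k := by rw [hc4]
            _ = (c ^ k) ^ 4 := by rw [← pow_mul, mul_comm, pow_mul]
          have h2 : (1 : ℝ) ≤ (2⁻¹ : ℝ) ^ l * c ^ k := by
            rw [inv_pow, ← div_eq_inv_mul, le_div_iff₀ (by positivity)]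
            linarith
          have h3 : (0:ℝ) ≤ (k.choose l : ℝ) * (2⁻¹ : ℝ) ^ k := by positivity
          calc (k.choose l : ℝ) * (2⁻¹ : ℝ) ^ k
              = ((k.choose l : ℝ) * (2⁻¹ : ℝ) ^ k) * 1 := by ring
            _ ≤ ((k.choose l : ℝ) * (2⁻¹ : ℝ) ^ k) * ((2⁻¹ : ℝ) ^ l * c ^ k) :=
                mul_le_mul_of_nonneg_left h2 h3
            _ = ((k.choose l : ℝ) * (2⁻¹ : ℝ) ^ l) * ((2⁻¹ : ℝ) ^ k * c ^ k) := by ring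
        · intro l _ _; positivity
    _ = (∑ l ∈ Finset.range (k+1), (k.choose l : ℝ) * (2⁻¹ : ℝ) ^ l)
          * ((2⁻¹ : ℝ) ^ k * c ^ k) := by rw [← Finset.sum_mul]
    _ = (3/2 * 2⁻¹ * c) ^ k := by rw [hbin, mul_pow, mul_pow]; ring
    _ ≤ Real.exp (-(1:ℝ)/16) ^ k := pow_le_pow_left₀ (by positivity) hce k
    _ = Real.exp (-(k : ℝ) / 16) := by
        rw [← Real.exp_nat_mul]; ring_nf

/-- If, conditionally on `R_n = k`, the random variable `S_n` is
binomial `B(k, 1/2)`, then `P(S_n ≤ R_n/4) ≤ E[exp(-R_n/16)]`. -/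
theorem stmt_5 {Ω : Type*} [MeasurableSpace Ω] (μ : Measure Ω) [IsProbabilityMeasure μ]
    (n : ℕ) (R S : Ω → ℕ) (hmR : Measurable R) (hmS : Measurable S)
    (hRle : ∀ ω, R ω ≤ n + 1)
    (hcond : ∀ k l : ℕ, l ≤ k →
      μ {ω | S ω = l ∧ R ω = k}
        = (Nat.choose k l : ℝ≥0∞) * (2 : ℝ≥0∞)⁻¹ ^ k * μ {ω | R ω = k}) :
    μ {ω | (S ω : ℝ) ≤ (R ω : ℝ) / 4}
      ≤ ∫⁻ ω, ENNReal.ofReal (Real.exp (-(R ω : ℝ) / 16)) ∂μ := by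

  classical
  set g : ℕ → ℝ≥0∞ := fun k => ENNReal.ofReal (Real.exp (-(k : ℝ) / 16)) with hg
  -- step A : decompose the lhs
  have hA : {ω | (S ω : ℝ) ≤ (R ω : ℝ) / 4}
      = ⋃ k ∈ Finset.range (n+2),
          {ω | (S ω : ℝ) ≤ (R ω : ℝ) / 4 ∧ R ω = k} := by
    ext ω
    simp only [Set.mem_setOf_eq, Set.mem_iUnion, Finset.mem_range]
    constructor
    · intro h; exact ⟨R ω, Nat.lt_succ_of_le (hRle ω), h, rfl⟩
    · rintro ⟨k, _, h, _⟩; exact h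
  have stepA : μ {ω | (S ω : ℝ) ≤ (R ω : ℝ) / 4}
      ≤ ∑ k ∈ Finset.range (n+2),
          μ {ω | (S ω : ℝ) ≤ (R ω : ℝ) / 4 ∧ R ω = k} := by
    rw [hA]; exact measure_biUnion_finset_le _ _
  -- step B : per-k bound
  have stepB : ∀ k : ℕ,
      μ {ω | (S ω : ℝ) ≤ (R ω : ℝ) / 4 ∧ R ω = k}
        ≤ g k * μ {ω | R ω = k} := by
    intro k
    set F : Finset ℕ := (Finset.range (k+1)).filter (fun l => 4 * l ≤ k) with hF
    have hsub : {ω | (S ω : ℝ) ≤ (R ω : ℝ) / 4 ∧ R ω = k}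
        ⊆ ⋃ l ∈ F, {ω | S ω = l ∧ R ω = k} := by
      intro ω hω
      obtain ⟨h1, h2⟩ := hω
      have h4 : 4 * S ω ≤ k := by
        have : (4 * S ω : ℝ) ≤ (k : ℝ) := by rw [h2] at h1; push_cast; linarith
        exact_mod_cast this
      simp only [Set.mem_iUnion, Finset.mem_filter, Finset.mem_range, hF]
      exact ⟨S ω, ⟨Nat.lt_succ_of_le (le_trans (Nat.le_mul_of_pos_left _ (by norm_num)) h4), h4⟩, rfl, h2⟩
    calc μ {ω | (S ω : ℝ) ≤ (R ω : ℝ) / 4 ∧ R ω = k}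
        ≤ μ (⋃ l ∈ F, {ω | S ω = l ∧ R ω = k}) := measure_mono hsub
      _ ≤ ∑ l ∈ F, μ {ω | S ω = l ∧ R ω = k} := measure_biUnion_finset_le _ _
      _ = (∑ l ∈ F, (Nat.choose k l : ℝ≥0∞) * (2 : ℝ≥0∞)⁻¹ ^ k) * μ {ω | R ω = k} := by
          rw [Finset.sum_mul]
          apply Finset.sum_congr rfl
          intro l hl
          simp only [hF, Finset.mem_filter] at hl
          exact hcond k l (le_trans (Nat.le_mul_of_pos_left _ (by norm_num)) hl.2)
      _ ≤ g k * μ {ω | R ω = k} := by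
          apply mul_le_mul_left
          have heq : ∀ l : ℕ, (Nat.choose k l : ℝ≥0∞) * (2 : ℝ≥0∞)⁻¹ ^ k
              = ENNReal.ofReal ((Nat.choose k l : ℝ) * (2⁻¹ : ℝ) ^ k) := by
            intro l
            rw [ENNReal.ofReal_mul (by positivity), ENNReal.ofReal_natCast,
              ENNReal.ofReal_pow (by norm_num),
              ENNReal.ofReal_inv_of_pos (by norm_num : (0:ℝ) < 2),
              ENNReal.ofReal_ofNat]
          calc ∑ l ∈ F, (Nat.choose k l : ℝ≥0∞) * (2 : ℝ≥0∞)⁻¹ ^ k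
              = ENNReal.ofReal (∑ l ∈ F, (Nat.choose k l : ℝ) * (2⁻¹ : ℝ) ^ k) := by
                rw [ENNReal.ofReal_sum_of_nonneg (fun l _ => by positivity)]
                exact Finset.sum_congr rfl fun l _ => heq l
            _ ≤ g k := ENNReal.ofReal_le_ofReal (chernoff_half k)
    -- step C : the rhs
  have stepC : ∑ k ∈ Finset.range (n+2), g k * μ {ω | R ω = k}
      ≤ ∫⁻ ω, ENNReal.ofReal (Real.exp (-(R ω : ℝ) / 16)) ∂μ := by
    have hmg : Measurable g := measurable_from_top
    have h1 : ∫⁻ ω, ENNReal.ofReal (Real.exp (-(R ω : ℝ) / 16)) ∂μ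
        = ∫⁻ k, g k ∂(μ.map R) := by
      rw [lintegral_map hmg hmR]
    have h2 : ∫⁻ k, g k ∂(μ.map R) = ∑' k : ℕ, g k * (μ.map R) {k} :=
      lintegral_countable' g
    have h3 : ∀ k : ℕ, (μ.map R) {k} = μ {ω | R ω = k} := by
      intro k
      rw [Measure.map_apply hmR (measurableSet_singleton k)]
      rfl
    rw [h1, h2]
    calc ∑ k ∈ Finset.range (n+2), g k * μ {ω | R ω = k}
        = ∑ k ∈ Finset.range (n+2), g k * (μ.map R) {k} := by
          exact Finset.sum_congr rfl fun k _ => by rw [h3]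
      _ ≤ ∑' k : ℕ, g k * (μ.map R) {k} := ENNReal.sum_le_tsum _
  calc μ {ω | (S ω : ℝ) ≤ (R ω : ℝ) / 4}
      ≤ ∑ k ∈ Finset.range (n+2), μ {ω | (S ω : ℝ) ≤ (R ω : ℝ) / 4 ∧ R ω = k} := stepA
    _ ≤ ∑ k ∈ Finset.range (n+2), g k * μ {ω | R ω = k} :=
        Finset.sum_le_sum fun k _ => stepB k
    _ ≤ _ := stepC
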